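/- arXiv:1905.11134 — 2 statements merged into one kernel-verified Lean document; each statement's English description precedes it below -/
import Mathlib

section
/- Let K be a class of finite undirected graphs and let W be a finite undirected graph. Then W ∈ Mod qId K if and only if: (1) for every one-element connected component H of W there exist a graph G_H ∈ K and a strong homomorphism φ_H : H → G_H; and (2) for every pair a, a' of distinct vertices belonging to the same connected component H of W, there exist a graph G_{a,a'} ∈ K and a strong homomorphism φ : H → G_{a,a'} with φ(a) ≠ φ(a'). -/
open Classical

/-- A graph `(V, E)`: an ambient type `U`, a set `verts ⊆ U` of vertices and an
edge relation `Edge ⊆ verts × verts`. -/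
structure AGraph : Type 1 where
  U : Type
  verts : Set U
  Edge : U → U → Prop
  edge_mem : ∀ a b, Edge a b → a ∈ verts ∧ b ∈ verts

namespace AGraph

/-- The induced subgraph of `G` on a set `S`. -/
def induce (G : AGraph) (S : Set G.U) : AGraph where
  U := G.U
  verts := G.verts ∩ S
  Edge a b := G.Edge a b ∧ a ∈ S ∧ b ∈ S
  edge_mem a b h := ⟨⟨(G.edge_mem a b h.1).1, h.2.1⟩, (G.edge_mem a b h.1).2, h.2.2⟩

/-- The set of vertices reachable from `a` by a directed walk (including `a` itself). -/
def reachSet (G : AGraph) (a : G.U) : Set G.U := {b | Relation.ReflTransGen G.Edge a b}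

/-- The subgraph of `G` induced by the set of vertices reachable from `a`. -/
def reachSub (G : AGraph) (a : G.U) : AGraph := G.induce (G.reachSet a)

/-- A graph is undirected if its edge relation is symmetric. -/
def Undirected (G : AGraph) : Prop := ∀ a b, G.Edge a b → G.Edge b a

end AGraph

/-- A homomorphism of graphs: maps vertices to vertices and edges to edges. -/
def IsHom (G H : AGraph) (f : G.U → H.U) : Prop :=
  (∀ a ∈ G.verts, f a ∈ H.verts) ∧ ∀ a b, G.Edge a b → H.Edge (f a) (f b)

/-- A strong homomorphism: additionally maps non-edges to non-edges. -/
def IsStrongHom (G H : AGraph) (f : G.U → H.U) : Prop :=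
  IsHom G H f ∧ ∀ a ∈ G.verts, ∀ b ∈ G.verts, ¬ G.Edge a b → ¬ H.Edge (f a) (f b)

/-- Isomorphism of graphs. -/
def IsIsomorphic (G H : AGraph) : Prop :=
  ∃ f : G.U → H.U, Set.BijOn f G.verts H.verts ∧
    ∀ a ∈ G.verts, ∀ b ∈ G.verts, (G.Edge a b ↔ H.Edge (f a) (f b))

/-- Terms of type (2,0) over a variable set `X`: variables, the constant `∞`,
and a binary operation (juxtaposition). -/
inductive GTerm (X : Type) : Type
  | var : X → GTerm X
  | inf : GTerm X
  | app : GTerm X → GTerm X → GTerm X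

namespace GTerm

/-- The set of variables occurring in a term. -/
def vars {X : Type} : GTerm X → Set X
  | var x => {x}
  | inf => ∅
  | app t₁ t₂ => t₁.vars ∪ t₂.vars

/-- A term is nontrivial if it contains no occurrence of `∞`. -/
def Nontrivial {X : Type} : GTerm X → Prop
  | var _ => True
  | inf => False
  | app t₁ t₂ => t₁.Nontrivial ∧ t₂.Nontrivial

/-- The leftmost variable of a term (`none` for the bare constant `∞` on the left). -/
def leftVar {X : Type} : GTerm X → Option X
  | var x => some x
  | inf => none
  | app t₁ _ => t₁.leftVar

/-- The edge set of the term graph `G(t)`. -/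
def edges {X : Type} : GTerm X → Set (X × X)
  | var _ => ∅
  | inf => ∅
  | app t₁ t₂ =>
      t₁.edges ∪ t₂.edges ∪
        {p | ∃ x y, t₁.leftVar = some x ∧ t₂.leftVar = some y ∧ p = (x, y)}

theorem vars_finite {X : Type} (t : GTerm X) : t.vars.Finite := by
  induction t with
  | var x => simpa [vars] using Set.finite_singleton x
  | inf => simpa [vars] using Set.finite_empty
  | app t₁ t₂ ih₁ ih₂ => simpa [vars] using ih₁.union ih₂

end GTerm

/-- The term graph `G(t)` of a term `t`: vertices are the variables of `t`. -/
def termGraph {X : Type} (t : GTerm X) : AGraph where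
  U := X
  verts := t.vars
  Edge a b := (a, b) ∈ t.edges ∧ a ∈ t.vars ∧ b ∈ t.vars
  edge_mem a b h := ⟨h.2.1, h.2.2⟩

/-- Evaluation of a term in the graph algebra `A(G)`; `none` plays the role of `∞`:
`x · y = x` if `(x,y)` is an edge, and `∞` otherwise. -/
noncomputable def AGraph.eval (G : AGraph) {X : Type} (h : X → Option G.U) :
    GTerm X → Option G.U
  | .var x => h x
  | .inf => none
  | .app t₁ t₂ =>
      match G.eval h t₁, G.eval h t₂ with
      | some a, some b => if G.Edge a b then some a else none
      | _, _ => none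

/-- Identities: pairs of terms. -/
abbrev GId (X : Type) := GTerm X × GTerm X

/-- An assignment takes values in `V(G) ∪ {∞}`. -/
def AGraph.Assign (G : AGraph) {X : Type} (h : X → Option G.U) : Prop :=
  ∀ x a, h x = some a → a ∈ G.verts

/-- The assignment `h` makes the identity `e` true in `A(G)`. -/
def AGraph.SatIdWith (G : AGraph) {X : Type} (h : X → Option G.U) (e : GId X) : Prop :=
  G.eval h e.1 = G.eval h e.2

/-- `G` satisfies the identity `e`. -/
def AGraph.SatId (G : AGraph) {X : Type} (e : GId X) : Prop :=
  ∀ h : X → Option G.U, G.Assign h → G.SatIdWith h e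

/-- An implication (quasi-identity) over the standard countably infinite
variable set `ℕ`: a finite set of identities (the premise) and an identity
(the consequence). -/
structure Imp : Type where
  prem : Set (GId ℕ)
  concl : GId ℕ
  prem_fin : prem.Finite

/-- `G` satisfies the implication `imp`. -/
def AGraph.SatImp (G : AGraph) (imp : Imp) : Prop :=
  ∀ h : ℕ → Option G.U, G.Assign h →
    (∀ e ∈ imp.prem, G.SatIdWith h e) → G.SatIdWith h imp.concl

/-- The implications satisfied by every member of a class `K` of graphs. -/
def qId (K : Set AGraph) : Set Imp := {imp | ∀ G ∈ K, G.SatImp imp}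

/-- The class of graphs satisfying every implication of `Sg`. -/
def ModI (Sg : Set Imp) : Set AGraph := {G | ∀ imp ∈ Sg, G.SatImp imp}

/-- The finite members of `ModI Sg`. -/
def ModIf (Sg : Set Imp) : Set AGraph := {G | G ∈ ModI Sg ∧ G.verts.Finite}

/-- The pointed graph `G^⊥`: a new vertex `⊥ = none` with edges from `⊥` to all
vertices, including a loop at `⊥`. -/
def AGraph.pointed (G : AGraph) : AGraph where
  U := Option G.U
  verts := insert none (some '' G.verts)
  Edge a b := b ∈ insert none (some '' G.verts) ∧
    (a = none ∨ ∃ u v, a = some u ∧ b = some v ∧ G.Edge u v)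
  edge_mem a b h := by
    refine ⟨?_, h.1⟩
    rcases h.2 with rfl | ⟨u, v, rfl, rfl, huv⟩
    · exact Set.mem_insert _ _
    · exact Set.mem_insert_of_mem _ ⟨u, (G.edge_mem u v huv).1, rfl⟩

/-- Direct product of a family of graphs (componentwise edges). -/
def gProd {I : Type} (G : I → AGraph) : AGraph where
  U := (i : I) → (G i).U
  verts := {a | ∀ i, a i ∈ (G i).verts}
  Edge a b := ∀ i, (G i).Edge (a i) (b i)
  edge_mem a b h :=
    ⟨fun i => ((G i).edge_mem _ _ (h i)).1, fun i => ((G i).edge_mem _ _ (h i)).2⟩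

/-- The pointed product `∏ i, (G i)^⊥` of a family of graphs. -/
def pointedProd {I : Type} (G : I → AGraph) : AGraph := gProd fun i => (G i).pointed

/-- `W` is a strong pointed subproduct of the family `G`:
(1) `W` is an induced subgraph of the pointed product;
(2) every vertex has nonempty support;
(3) for every vertex `a` and every `k` in the support of `a`, the projection `p k`
restricted to `reach_W(a)` is a strong homomorphism into `G k`. -/
def IsSPSofFam {I : Type} (G : I → AGraph) (W : AGraph) : Prop :=
  ∃ S : Set (pointedProd G).U,
    W = (pointedProd G).induce S ∧
    (∀ a ∈ ((pointedProd G).induce S).verts, ∃ i, a i ≠ none) ∧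
    (∀ a ∈ ((pointedProd G).induce S).verts, ∀ k : I, a k ≠ none →
      (∀ b ∈ (((pointedProd G).induce S).reachSub a).verts, b k ≠ none) ∧
      (∀ b ∈ (((pointedProd G).induce S).reachSub a).verts,
        ∀ u, b k = some u → u ∈ (G k).verts) ∧
      (∀ b ∈ (((pointedProd G).induce S).reachSub a).verts,
       ∀ c ∈ (((pointedProd G).induce S).reachSub a).verts,
        ∀ u v, b k = some u → c k = some v →
          ((((pointedProd G).induce S).reachSub a).Edge b c ↔ (G k).Edge u v)))

/-- The class of all strong pointed subproducts of families of members of `K`. -/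
def Psps (K : Set AGraph) : Set AGraph :=
  {W | ∃ (I : Type) (G : I → AGraph), (∀ i, G i ∈ K) ∧ IsSPSofFam G W}

/-- The finite members of `Psps K`. -/
def PspsFin (K : Set AGraph) : Set AGraph := {W | W ∈ Psps K ∧ W.verts.Finite}

/-- Isomorphic copies of members of a class of graphs. -/
def Icl (C : Set AGraph) : Set AGraph := {W | ∃ V ∈ C, IsIsomorphic V W}

/-- `W` is the union of a directed family of members of `C` (the members of the
family are induced subgraphs of a common member, pairwise). -/
def IsDirUnionOf (W : AGraph) (C : Set AGraph) : Prop :=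
  ∃ (ι : Type) (V : ι → Set W.U) (E : ι → W.U → W.U → Prop)
    (hmem : ∀ i, ∀ a b, E i a b → a ∈ V i ∧ b ∈ V i),
    (∀ i, AGraph.mk W.U (V i) (E i) (hmem i) ∈ C) ∧
    (∀ i j, ∃ k,
      (V i ⊆ V k ∧ ∀ a b, E i a b ↔ E k a b ∧ a ∈ V i ∧ b ∈ V i) ∧
      (V j ⊆ V k ∧ ∀ a b, E j a b ↔ E k a b ∧ a ∈ V j ∧ b ∈ V j)) ∧
    W.verts = ⋃ i, V i ∧
    ∀ a b, W.Edge a b ↔ ∃ i, E i a b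

/-- The class of all directed unions of members of `C`. -/
def DCl (C : Set AGraph) : Set AGraph := {W | IsDirUnionOf W C}

/-- Condition (a) of Proposition `IPK-ab`. -/
def CondA (K : Set AGraph) (W : AGraph) : Prop :=
  ∀ a ∈ W.verts, ∃ Ga ∈ K, ∃ φ : W.U → Ga.U, IsStrongHom (W.reachSub a) Ga φ

/-- Condition (b) of Proposition `IPK-ab`. -/
def CondB (K : Set AGraph) (W : AGraph) : Prop :=
  ∀ a ∈ W.verts, ∀ a' ∈ W.verts, a ≠ a' → W.reachSet a = W.reachSet a' →
    ∃ Gp ∈ K, ∃ φ : W.U → Gp.U, IsStrongHom (W.reachSub a) Gp φ ∧ φ a ≠ φ a'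

/-- The identities `x_a x_b ≈ x_a` for edges `(a,b)` of `G` (variables are the
vertices of `G`). -/
def GammaE (G : AGraph) : Set (GId G.U) :=
  {e | ∃ a b, G.Edge a b ∧ e = (GTerm.app (GTerm.var a) (GTerm.var b), GTerm.var a)}

/-- The identities `x_a x_b ≈ ∞` for non-edges `(a,b)` of `G`. -/
def GammaN (G : AGraph) : Set (GId G.U) :=
  {e | ∃ a b, a ∈ G.verts ∧ b ∈ G.verts ∧ ¬ G.Edge a b ∧
    e = (GTerm.app (GTerm.var a) (GTerm.var b), GTerm.inf)}

/-- `Σ(G) = Γ_e(G) ∪ Γ_n(G)`. -/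
def SigmaIds (G : AGraph) : Set (GId G.U) := GammaE G ∪ GammaN G

theorem SigmaIds_finite (G : AGraph) (hfin : G.verts.Finite) : (SigmaIds G).Finite := by
  classical
  have hsub : SigmaIds G ⊆
      (fun p : G.U × G.U =>
        if G.Edge p.1 p.2 then
          (GTerm.app (GTerm.var p.1) (GTerm.var p.2), GTerm.var p.1)
        else (GTerm.app (GTerm.var p.1) (GTerm.var p.2), GTerm.inf)) ''
        (G.verts ×ˢ G.verts) := by
    rintro e (⟨a, b, hab, rfl⟩ | ⟨a, b, ha, hb, hnab, rfl⟩)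
    · exact ⟨(a, b), Set.mk_mem_prod (G.edge_mem a b hab).1 (G.edge_mem a b hab).2,
        by simp [hab]⟩
    · exact ⟨(a, b), Set.mk_mem_prod ha hb, by simp [hnab]⟩
  exact ((hfin.prod hfin).image _).subset hsub

section Aux

variable {W : AGraph}

lemma reach_subset_verts {a : W.U} (ha : a ∈ W.verts) : W.reachSet a ⊆ W.verts := by
  intro b hb
  induction hb with
  | refl => exact ha
  | tail _ h _ => exact (W.edge_mem _ _ h).2

lemma reach_closed {a u v : W.U} (hu : u ∈ W.reachSet a) (huv : W.Edge u v) :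
    v ∈ W.reachSet a := Relation.ReflTransGen.tail hu huv

lemma reach_symm (hWu : W.Undirected) {a b : W.U} (hb : b ∈ W.reachSet a) :
    a ∈ W.reachSet b := by
  induction hb with
  | refl => exact .refl
  | tail _ h ih => exact Relation.ReflTransGen.head (hWu _ _ h) ih

lemma eval_mem {X : Type} {h : X → Option W.U} (hh : W.Assign h) :
    ∀ t : GTerm X, ∀ u, W.eval h t = some u → u ∈ W.verts := by
  intro t
  induction t with
  | var x => intro u hu; exact hh x u hu
  | inf => intro u hu; simp [AGraph.eval] at hu
  | app t₁ t₂ ih₁ ih₂ =>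
    intro u hu
    cases e1 : W.eval h t₁ with
    | none => simp [AGraph.eval, e1] at hu
    | some p =>
      cases e2 : W.eval h t₂ with
      | none => simp [AGraph.eval, e1, e2] at hu
      | some q =>
        have hpu : p = u := by
          by_cases he : W.Edge p q
          · simpa [AGraph.eval, e1, e2, he] using hu
          · simp [AGraph.eval, e1, e2, he] at hu
        subst hpu
        exact ih₁ _ e1

/-- The partial-homomorphism map on `V(W) ∪ {∞}` induced by a strong homomorphism
on the component of `a`. -/
noncomputable def psi (W G : AGraph) (a : W.U) (φ : W.U → G.U) : Option W.U → Option G.U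
  | none => none
  | some u => if u ∈ W.verts ∩ W.reachSet a then some (φ u) else none

lemma psi_eval {G : AGraph} {a : W.U} {φ : W.U → G.U}
    (hs : IsStrongHom (W.reachSub a) G φ) {X : Type} (h : X → Option W.U) :
    ∀ t : GTerm X, G.eval (fun n => psi W G a φ (h n)) t = psi W G a φ (W.eval h t) := by
  intro t
  induction t with
  | var x => rfl
  | inf => rfl
  | app t₁ t₂ ih₁ ih₂ =>
    show (match G.eval (fun n => psi W G a φ (h n)) t₁, G.eval (fun n => psi W G a φ (h n)) t₂ with
      | some a, some b => if G.Edge a b then some a else none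
      | _, _ => none) = _
    rw [ih₁, ih₂]
    show _ = psi W G a φ (match W.eval h t₁, W.eval h t₂ with
      | some a, some b => if W.Edge a b then some a else none
      | _, _ => none)
    cases e1 : W.eval h t₁ with
    | none => simp [psi]
    | some u =>
      by_cases hu : u ∈ W.verts ∩ W.reachSet a
      · cases e2 : W.eval h t₂ with
        | none => simp [psi, hu]
        | some v =>
          by_cases hv : v ∈ W.verts ∩ W.reachSet a
          · -- both in component
            have hiff : W.Edge u v ↔ G.Edge (φ u) (φ v) := by
              constructor
              · intro he
                exact hs.1.2 u v ⟨he, hu.2, hv.2⟩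
              · intro he
                by_contra hne
                exact hs.2 u hu v hv (fun hc => hne hc.1) he
            by_cases he : W.Edge u v
            · simp [psi, hu, hv, he, hiff.mp he]
            · have hg : ¬ G.Edge (φ u) (φ v) := fun hc => he (hiff.mpr hc)
              simp [psi, hu, hv, he, hg]
          · -- v not in component: no edge u v
            have hne : ¬ W.Edge u v := by
              intro he
              exact hv ⟨(W.edge_mem u v he).2, reach_closed hu.2 he⟩
            simp [psi, hu, hv, hne]
      · -- u not in component
        cases e2 : W.eval h t₂ with
        | none => simp [psi, hu]
        | some v =>
          by_cases he : W.Edge u v <;> simp [psi, hu, he]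

lemma psi_assign {G : AGraph} {a : W.U} {φ : W.U → G.U}
    (hs : IsStrongHom (W.reachSub a) G φ) {X : Type} {h : X → Option W.U} :
    G.Assign (fun n => psi W G a φ (h n)) := by
  intro x q hq
  have hq' : psi W G a φ (h x) = some q := hq
  clear hq
  cases hx : h x with
  | none => simp [psi, hx] at hq'
  | some u =>
    rename' hq' => hq
    rw [hx] at hq
    by_cases hu : u ∈ W.verts ∩ W.reachSet a
    · simp [psi, hu] at hq
      subst hq
      exact hs.1.1 u hu
    · simp [psi, hu] at hq

end Aux
section Aux2

variable {W : AGraph}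

/-- From conditions (1) and (2), every component admits some strong homomorphism
into a member of `K`. -/
lemma exists_hom (K : Set AGraph)
    (h1 : ∀ a ∈ W.verts, W.reachSet a = {a} →
        ∃ GH ∈ K, ∃ φ : W.U → GH.U, IsStrongHom (W.reachSub a) GH φ)
    (h2 : ∀ a ∈ W.verts, ∀ a' ∈ W.verts, a ≠ a' → a' ∈ W.reachSet a →
        ∃ Gp ∈ K, ∃ φ : W.U → Gp.U, IsStrongHom (W.reachSub a) Gp φ ∧ φ a ≠ φ a')
    {a : W.U} (ha : a ∈ W.verts) :
    ∃ G ∈ K, ∃ φ : W.U → G.U, IsStrongHom (W.reachSub a) G φ := by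
  by_cases hsing : W.reachSet a = {a}
  · exact h1 a ha hsing
  · have : ∃ b ∈ W.reachSet a, b ≠ a := by
      by_contra hc
      push_neg at hc
      apply hsing
      apply Set.eq_singleton_iff_unique_mem.mpr
      exact ⟨Relation.ReflTransGen.refl, hc⟩
    obtain ⟨b, hb, hba⟩ := this
    have hbv : b ∈ W.verts := reach_subset_verts ha hb
    obtain ⟨G, hGK, φ, hφ, _⟩ := h2 a ha b hbv (Ne.symm hba) hb
    exact ⟨G, hGK, φ, hφ⟩

lemma backward_dir (K : Set AGraph) (W : AGraph)
    (h1 : ∀ a ∈ W.verts, W.reachSet a = {a} →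
        ∃ GH ∈ K, ∃ φ : W.U → GH.U, IsStrongHom (W.reachSub a) GH φ)
    (h2 : ∀ a ∈ W.verts, ∀ a' ∈ W.verts, a ≠ a' → a' ∈ W.reachSet a →
        ∃ Gp ∈ K, ∃ φ : W.U → Gp.U, IsStrongHom (W.reachSub a) Gp φ ∧ φ a ≠ φ a') :
    W ∈ ModI (qId K) := by
  intro imp himp h hh hprem
  by_contra hne
  -- helper: transfer a strong hom of the component of `a` to a contradiction machine
  have key : ∀ a : W.U, a ∈ W.verts → ∀ G ∈ K, ∀ φ : W.U → G.U,
      IsStrongHom (W.reachSub a) G φ →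
      psi W G a φ (W.eval h imp.concl.1) = psi W G a φ (W.eval h imp.concl.2) := by
    intro a ha G hGK φ hφ
    have hsat := himp G hGK (fun n => psi W G a φ (h n)) (psi_assign hφ) ?_
    · unfold AGraph.SatIdWith at hsat
      rwa [psi_eval hφ, psi_eval hφ] at hsat
    · intro e he
      have := hprem e he
      unfold AGraph.SatIdWith at this ⊢
      rw [psi_eval hφ, psi_eval hφ, this]
  -- case analysis on the two evaluations
  cases e1 : W.eval h imp.concl.1 with
  | none =>
    cases e2 : W.eval h imp.concl.2 with
    | none => exact hne (e1.trans e2.symm)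
    | some v =>
      have hv : v ∈ W.verts := eval_mem hh _ _ e2
      obtain ⟨G, hGK, φ, hφ⟩ := exists_hom K h1 h2 hv
      have := key v hv G hGK φ hφ
      rw [e1, e2] at this
      have hm : v ∈ W.verts ∩ W.reachSet v := ⟨hv, Relation.ReflTransGen.refl⟩
      simp [psi, hm] at this
  | some u =>
    have hu : u ∈ W.verts := eval_mem hh _ _ e1
    cases e2 : W.eval h imp.concl.2 with
    | none =>
      obtain ⟨G, hGK, φ, hφ⟩ := exists_hom K h1 h2 hu
      have := key u hu G hGK φ hφ
      rw [e1, e2] at this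
      have hm : u ∈ W.verts ∩ W.reachSet u := ⟨hu, Relation.ReflTransGen.refl⟩
      simp [psi, hm] at this
    | some v =>
      have hv : v ∈ W.verts := eval_mem hh _ _ e2
      have huv : u ≠ v := fun hc => hne (show W.eval h imp.concl.1 = W.eval h imp.concl.2 by
        rw [e1, e2, hc])
      by_cases hreach : v ∈ W.reachSet u
      · obtain ⟨G, hGK, φ, hφ, hsep⟩ := h2 u hu v hv huv hreach
        have := key u hu G hGK φ hφ
        rw [e1, e2] at this
        have h1' : u ∈ W.verts ∩ W.reachSet u := ⟨hu, Relation.ReflTransGen.refl⟩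
        have h2' : v ∈ W.verts ∩ W.reachSet u := ⟨hv, hreach⟩
        simp [psi, h1', h2'] at this
        exact hsep this
      · obtain ⟨G, hGK, φ, hφ⟩ := exists_hom K h1 h2 hu
        have := key u hu G hGK φ hφ
        rw [e1, e2] at this
        have h1' : u ∈ W.verts ∩ W.reachSet u := ⟨hu, Relation.ReflTransGen.refl⟩
        have h2' : v ∉ W.verts ∩ W.reachSet u := fun hc => hreach hc.2
        simp [psi, h1', h2'] at this

end Aux2
section Aux3

variable {W : AGraph}

lemma eval_app_var (G : AGraph) {X : Type} (h : X → Option G.U) (x y : X) :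
    G.eval h (GTerm.app (GTerm.var x) (GTerm.var y)) =
      match h x, h y with
      | some p, some q => if G.Edge p q then some p else none
      | _, _ => none := rfl

lemma eval_var (G : AGraph) {X : Type} (h : X → Option G.U) (x : X) :
    G.eval h (GTerm.var x) = h x := rfl

lemma eval_inf (G : AGraph) {X : Type} (h : X → Option G.U) :
    G.eval h (GTerm.inf : GTerm X) = none := rfl

/-- Forward direction, condition (1). -/
lemma forward_one (K : Set AGraph) (hW : W ∈ ModI (qId K))
    {a : W.U} (ha : a ∈ W.verts) (hsing : W.reachSet a = {a}) :
    ∃ GH ∈ K, ∃ φ : W.U → GH.U, IsStrongHom (W.reachSub a) GH φ := by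
  by_contra hno
  by_cases hloop : W.Edge a a
  · -- looped singleton component
    set imp : Imp := ⟨{(GTerm.app (GTerm.var 0) (GTerm.var 0), GTerm.var 0)},
      (GTerm.var 0, GTerm.inf), Set.finite_singleton _⟩ with himpdef
    have hmem : imp ∈ qId K := by
      intro G hGK h' hh' hpre
      show G.eval h' (GTerm.var 0) = G.eval h' GTerm.inf
      rw [eval_var, eval_inf]
      cases h0 : h' 0 with
      | none => rfl
      | some p =>
        exfalso
        have hp : p ∈ G.verts := hh' 0 p h0
        have := hpre _ rfl
        unfold AGraph.SatIdWith at this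
        rw [eval_app_var, eval_var, h0] at this
        have hGloop : G.Edge p p := by
          by_contra hc
          simp [hc] at this
        apply hno
        refine ⟨G, hGK, fun _ => p, ⟨⟨fun _ _ => hp, fun _ _ _ => hGloop⟩, ?_⟩⟩
        intro u hu v hv hne
        exfalso
        apply hne
        have hu' : u = a := by
          have := hu.2
          rw [hsing] at this
          exact this
        have hv' : v = a := by
          have := hv.2
          rw [hsing] at this
          exact this
        rw [hu', hv']
        exact ⟨hloop, Relation.ReflTransGen.refl, Relation.ReflTransGen.refl⟩
    have hWsat := hW imp hmem (fun n => if n = 0 then some a else none)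
      (by intro x b hb; by_cases hx : x = 0 <;> simp [hx] at hb; rwa [← hb])
      (by
        intro e he
        have he' : e = (GTerm.app (GTerm.var 0) (GTerm.var 0), GTerm.var 0) := he
        subst he'
        unfold AGraph.SatIdWith
        rw [eval_app_var, eval_var]
        simp [hloop])
    unfold AGraph.SatIdWith at hWsat
    rw [eval_var, eval_inf] at hWsat
    simp at hWsat
  · -- loopless singleton component
    set imp : Imp := ⟨{(GTerm.app (GTerm.var 0) (GTerm.var 0), GTerm.inf)},
      (GTerm.var 0, GTerm.inf), Set.finite_singleton _⟩ with himpdef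
    have hmem : imp ∈ qId K := by
      intro G hGK h' hh' hpre
      show G.eval h' (GTerm.var 0) = G.eval h' GTerm.inf
      rw [eval_var, eval_inf]
      cases h0 : h' 0 with
      | none => rfl
      | some p =>
        exfalso
        have hp : p ∈ G.verts := hh' 0 p h0
        have := hpre _ rfl
        unfold AGraph.SatIdWith at this
        rw [eval_app_var, eval_inf, h0] at this
        have hGloop : ¬ G.Edge p p := by
          intro hc
          simp [hc] at this
        apply hno
        refine ⟨G, hGK, fun _ => p, ⟨⟨fun _ _ => hp, ?_⟩, fun _ _ _ _ _ => hGloop⟩⟩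
        intro u v huv
        exfalso
        have hu' : u = a := by
          have := huv.2.1
          rw [hsing] at this
          exact this
        have hv' : v = a := by
          have := huv.2.2
          rw [hsing] at this
          exact this
        rw [hu', hv'] at huv
        exact hloop huv.1
    have hWsat := hW imp hmem (fun n => if n = 0 then some a else none)
      (by intro x b hb; by_cases hx : x = 0 <;> simp [hx] at hb; rwa [← hb])
      (by
        intro e he
        have he' : e = (GTerm.app (GTerm.var 0) (GTerm.var 0), GTerm.inf) := he
        subst he'
        unfold AGraph.SatIdWith
        rw [eval_app_var, eval_inf]
        simp [hloop])
    unfold AGraph.SatIdWith at hWsat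
    rw [eval_var, eval_inf] at hWsat
    simp at hWsat

end Aux3
section Aux4

variable {W : AGraph}

/-- Forward direction, condition (2). -/
lemma forward_two (K : Set AGraph) (hWu : W.Undirected) (hWf : W.verts.Finite)
    (hW : W ∈ ModI (qId K))
    {a a' : W.U} (ha : a ∈ W.verts) (ha' : a' ∈ W.verts) (haa' : a ≠ a')
    (hreach : a' ∈ W.reachSet a) :
    ∃ Gp ∈ K, ∃ φ : W.U → Gp.U,
      IsStrongHom (W.reachSub a) Gp φ ∧ φ a ≠ φ a' := by
  by_contra hno
  push_neg at hno
  set S := W.reachSet a with hSdef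
  have hSsub : S ⊆ W.verts := reach_subset_verts ha
  have hSfin : S.Finite := hWf.subset hSsub
  obtain ⟨e, hinj⟩ : ∃ f : W.U → ℕ, Set.InjOn f S :=
    Set.countable_iff_exists_injOn.mp hSfin.countable
  set f : W.U × W.U → GId ℕ := fun p =>
    if W.Edge p.1 p.2 then
      (GTerm.app (GTerm.var (e p.1)) (GTerm.var (e p.2)), GTerm.var (e p.1))
    else (GTerm.app (GTerm.var (e p.1)) (GTerm.var (e p.2)), GTerm.inf) with hfdef
  set imp : Imp := ⟨f '' (S ×ˢ S), (GTerm.var (e a), GTerm.var (e a')),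
    (hSfin.prod hSfin).image f⟩ with himpdef
  have hmem : imp ∈ qId K := by
    intro G hGK h' hh' hpre
    -- edge propagation
    have key2 : ∀ u ∈ S, ∀ v ∈ S, W.Edge u v → ∀ p, h' (e u) = some p →
        ∃ q, h' (e v) = some q ∧ G.Edge p q := by
      intro u hu v hv huv p hp
      have hid := hpre (f (u, v)) ⟨(u, v), Set.mk_mem_prod hu hv, rfl⟩
      unfold AGraph.SatIdWith at hid
      rw [hfdef] at hid
      simp only [huv, if_pos] at hid
      rw [eval_app_var, eval_var, hp] at hid
      cases hq : h' (e v) with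
      | none => rw [hq] at hid; simp at hid
      | some q =>
        rw [hq] at hid
        refine ⟨q, rfl, ?_⟩
        by_contra hc
        simp [hc] at hid
    have key3 : ∀ u ∈ S, ∀ v ∈ S, ¬ W.Edge u v → ∀ p q, h' (e u) = some p →
        h' (e v) = some q → ¬ G.Edge p q := by
      intro u hu v hv huv p q hp hq hc
      have hid := hpre (f (u, v)) ⟨(u, v), Set.mk_mem_prod hu hv, rfl⟩
      unfold AGraph.SatIdWith at hid
      rw [hfdef] at hid
      simp only [huv, if_neg, if_false] at hid
      rw [eval_app_var, eval_inf, hp, hq] at hid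
      simp [hc] at hid
    show h' (e a) = h' (e a')
    cases h0 : h' (e a) with
    | none =>
      -- propagate "none" backwards: if h'(e a') were some, h'(e a) would be some
      cases h0' : h' (e a') with
      | none => rfl
      | some p' =>
        exfalso
        have hback : a ∈ W.reachSet a' := reach_symm hWu hreach
        have hprop : ∀ v, Relation.ReflTransGen W.Edge a' v →
            ∃ q, h' (e v) = some q := by
          intro v hv
          induction hv with
          | refl => exact ⟨p', h0'⟩
          | tail hru hedge ih =>
            rename_i u v'
            have huS : u ∈ S := Relation.ReflTransGen.trans hreach hru
            have hvS : v' ∈ S := reach_closed huS hedge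
            obtain ⟨q, hq⟩ := ih
            obtain ⟨q', hq', _⟩ := key2 u huS v' hvS hedge q hq
            exact ⟨q', hq'⟩
        obtain ⟨q, hq⟩ := hprop a hback
        rw [h0] at hq
        cases hq
    | some p =>
      -- all of the component is mapped to vertices; build the strong hom
      have hprop : ∀ v, v ∈ S → ∃ q, h' (e v) = some q := by
        intro v hv
        induction hv with
        | refl => exact ⟨p, h0⟩
        | tail hru hedge ih =>
          rename_i u v'
          have huS : u ∈ S := hru
          have hvS : v' ∈ S := reach_closed huS hedge
          obtain ⟨q, hq⟩ := ih
          obtain ⟨q', hq', _⟩ := key2 u huS v' hvS hedge q hq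
          exact ⟨q', hq'⟩
      set φ : W.U → G.U := fun v => (h' (e v)).getD p with hφdef
      have hφS : ∀ v ∈ S, h' (e v) = some (φ v) := by
        intro v hv
        obtain ⟨q, hq⟩ := hprop v hv
        rw [hφdef]
        simp [hq]
      have hstrong : IsStrongHom (W.reachSub a) G φ := by
        refine ⟨⟨?_, ?_⟩, ?_⟩
        · intro v hv
          exact hh' (e v) (φ v) (hφS v hv.2)
        · intro u v huv
          obtain ⟨he, hu, hv⟩ := huv
          obtain ⟨q, hq, hGq⟩ := key2 u hu v hv he (φ u) (hφS u hu)
          have : q = φ v := by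
            have := (hφS v hv).symm.trans hq
            exact (Option.some.inj this).symm
          rwa [this] at hGq
        · intro u hu v hv hne hc
          have hWne : ¬ W.Edge u v := fun hw => hne ⟨hw, hu.2, hv.2⟩
          exact key3 u hu.2 v hv.2 hWne (φ u) (φ v) (hφS u hu.2) (hφS v hv.2) hc
      have heq : φ a = φ a' := hno G hGK φ hstrong
      have hpa : p = φ a :=
        Option.some.inj (h0.symm.trans (hφS a Relation.ReflTransGen.refl))
      rw [hφS a' hreach, hpa, heq]
  -- now use W ∈ ModI (qId K)
  set hA : ℕ → Option W.U := fun n =>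
    if hn : ∃ v, v ∈ S ∧ e v = n then some (Classical.choose hn) else none with hAdef
  have hAS : ∀ u ∈ S, hA (e u) = some u := by
    intro u hu
    have hn : ∃ v, v ∈ S ∧ e v = e u := ⟨u, hu, rfl⟩
    have hc := Classical.choose_spec hn
    have : Classical.choose hn = u := hinj hc.1 hu hc.2
    rw [hAdef]
    simp only [dif_pos hn, this]
  have hWsat := hW imp hmem hA ?_ ?_
  · unfold AGraph.SatIdWith at hWsat
    rw [himpdef] at hWsat
    rw [eval_var, eval_var, hAS a Relation.ReflTransGen.refl, hAS a' hreach] at hWsat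
    exact haa' (Option.some.inj hWsat)
  · intro x b hb
    have hb' : (if hn : ∃ v, v ∈ S ∧ e v = x then some (Classical.choose hn) else none)
        = some b := hb
    by_cases hn : ∃ v, v ∈ S ∧ e v = x
    · rw [dif_pos hn] at hb'
      cases hb'
      exact hSsub (Classical.choose_spec hn).1
    · rw [dif_neg hn] at hb'
      cases hb'
  · intro id hid
    obtain ⟨⟨u, v⟩, huv, rfl⟩ := hid
    have hu : u ∈ S := huv.1
    have hv : v ∈ S := huv.2
    unfold AGraph.SatIdWith
    rw [hfdef]
    by_cases he : W.Edge u v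
    · simp only [he, if_pos]
      rw [eval_app_var, eval_var, hAS u hu, hAS v hv]
      simp [he]
    · simp only [he, if_neg, if_false]
      rw [eval_app_var, eval_inf, hAS u hu, hAS v hv]
      simp [he]

end Aux4

/-- for a class `K` of finite undirected graphs and a finite
undirected graph `W`, `W ∈ Mod qId K` iff (1) every one-element connected
component of `W` admits a strong homomorphism into a member of `K`, and (2) any
two distinct vertices of a common connected component `H` of `W` are separated
by a strong homomorphism of `H` into a member of `K`. (In an undirected graph
the connected component of `a` is `reach_W(a)`.) -/
theorem statement_12 (K : Set AGraph) (hK : ∀ G ∈ K, G.Undirected ∧ G.verts.Finite)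
    (W : AGraph) (hWu : W.Undirected) (hWf : W.verts.Finite) :
    W ∈ ModI (qId K) ↔
      ((∀ a ∈ W.verts, W.reachSet a = {a} →
          ∃ GH ∈ K, ∃ φ : W.U → GH.U, IsStrongHom (W.reachSub a) GH φ) ∧
       (∀ a ∈ W.verts, ∀ a' ∈ W.verts, a ≠ a' → a' ∈ W.reachSet a →
          ∃ Gp ∈ K, ∃ φ : W.U → Gp.U,
            IsStrongHom (W.reachSub a) Gp φ ∧ φ a ≠ φ a')) := by
  constructor
  · intro hW
    exact ⟨fun a ha hs => forward_one K hW ha hs,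
      fun a ha a2 ha2 hne hr => forward_two K hWu hWf hW ha ha2 hne hr⟩
  · rintro ⟨c1, c2⟩
    exact backward_dir K W c1 c2
end

section
/- Let G₀ be the graph with vertex set {0,1} and edge set {(0,1),(1,0),(1,1)}. A graph G belongs to Mod qId G₀ if and only if G is undirected and each connected component of G is isomorphic to an induced subgraph of G₀ (i.e., either to G₀ itself, to a loopless isolated vertex, or to an isolated vertex with a loop). -/
open Classical

/-- The graph `G₀` with vertices `0, 1` and edges `(0,1), (1,0), (1,1)`. -/
def G0 : AGraph where
  U := ℕ
  verts := {0, 1}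
  Edge a b := (a = 0 ∧ b = 1) ∨ (a = 1 ∧ b = 0) ∨ (a = 1 ∧ b = 1)
  edge_mem := by
    rintro a b (⟨rfl, rfl⟩ | ⟨rfl, rfl⟩ | ⟨rfl, rfl⟩) <;> simp

namespace S13

open GTerm

noncomputable section

/-- Possible values of an assignment into `G0`. -/
lemma tri (o : Option ℕ) (h : ∀ a, o = some a → a ∈ G0.verts) :
    o = none ∨ o = some 0 ∨ o = some 1 := by
  match o with
  | none => exact Or.inl rfl
  | some a =>
    have := h a rfl
    simp only [G0] at this
    rcases this with h | h
    · exact Or.inr (Or.inl (by rw [h]))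
    · exact Or.inr (Or.inr (by rw [h]))

/-- x·y ≈ x, y·x ≈ ∞ ⟹ x ≈ ∞ (forces symmetry of the edge relation). -/
def impSym : Imp :=
  ⟨{(.app (.var 0) (.var 1), .var 0), (.app (.var 1) (.var 0), .inf)},
    (.var 0, .inf), (Set.finite_singleton _).insert _⟩

/-- no edge between two loopless vertices. -/
def imp1 : Imp :=
  ⟨{(.app (.var 0) (.var 1), .var 0), (.app (.var 1) (.var 0), .var 1),
    (.app (.var 0) (.var 0), .inf), (.app (.var 1) (.var 1), .inf)},
    (.var 0, .inf),
    (((Set.finite_singleton _).insert _).insert _).insert _⟩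

/-- a vertex has at most one loopless neighbour. -/
def imp3a : Imp :=
  ⟨{(.app (.var 0) (.var 1), .var 0), (.app (.var 1) (.var 0), .var 1),
    (.app (.var 0) (.var 2), .var 0), (.app (.var 2) (.var 0), .var 2),
    (.app (.var 1) (.var 1), .inf), (.app (.var 2) (.var 2), .inf)},
    (.var 1, .var 2),
    (((((Set.finite_singleton _).insert _).insert _).insert _).insert _).insert _⟩

/-- a vertex has at most one looped neighbour. -/
def imp3b : Imp :=
  ⟨{(.app (.var 0) (.var 1), .var 0), (.app (.var 1) (.var 0), .var 1),
    (.app (.var 0) (.var 2), .var 0), (.app (.var 2) (.var 0), .var 2),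
    (.app (.var 1) (.var 1), .var 1), (.app (.var 2) (.var 2), .var 2)},
    (.var 1, .var 2),
    (((((Set.finite_singleton _).insert _).insert _).insert _).insert _).insert _⟩

lemma G0_satSym : G0.SatImp impSym := by
  intro h hA hp
  have p1 := hp _ (Set.mem_insert _ _)
  have p2 := hp _ (Set.mem_insert_of_mem _ rfl)
  have h0 := tri (h 0) (fun a => hA 0 a)
  have h1 := tri (h 1) (fun a => hA 1 a)
  rcases h0 with h0 | h0 | h0 <;> rcases h1 with h1 | h1 | h1 <;>
    simp_all [AGraph.SatIdWith, AGraph.eval, G0, impSym]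

lemma G0_sat1 : G0.SatImp imp1 := by
  intro h hA hp
  have p1 := hp _ (Set.mem_insert _ _)
  have p2 := hp _ (Set.mem_insert_of_mem _ (Set.mem_insert _ _))
  have p3 := hp _ (Set.mem_insert_of_mem _ (Set.mem_insert_of_mem _ (Set.mem_insert _ _)))
  have p4 := hp _ (Set.mem_insert_of_mem _ (Set.mem_insert_of_mem _ (Set.mem_insert_of_mem _ rfl)))
  have h0 := tri (h 0) (fun a => hA 0 a)
  have h1 := tri (h 1) (fun a => hA 1 a)
  rcases h0 with h0 | h0 | h0 <;> rcases h1 with h1 | h1 | h1 <;>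
    simp_all [AGraph.SatIdWith, AGraph.eval, G0, imp1]

lemma G0_sat3a : G0.SatImp imp3a := by
  intro h hA hp
  have p1 := hp _ (Set.mem_insert _ _)
  have p2 := hp _ (Set.mem_insert_of_mem _ (Set.mem_insert _ _))
  have p3 := hp _ (Set.mem_insert_of_mem _ (Set.mem_insert_of_mem _ (Set.mem_insert _ _)))
  have p4 := hp _ (Set.mem_insert_of_mem _ (Set.mem_insert_of_mem _
    (Set.mem_insert_of_mem _ (Set.mem_insert _ _))))
  have p5 := hp _ (Set.mem_insert_of_mem _ (Set.mem_insert_of_mem _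
    (Set.mem_insert_of_mem _ (Set.mem_insert_of_mem _ (Set.mem_insert _ _)))))
  have p6 := hp _ (Set.mem_insert_of_mem _ (Set.mem_insert_of_mem _
    (Set.mem_insert_of_mem _ (Set.mem_insert_of_mem _ (Set.mem_insert_of_mem _ rfl)))))
  have h0 := tri (h 0) (fun a => hA 0 a)
  have h1 := tri (h 1) (fun a => hA 1 a)
  have h2 := tri (h 2) (fun a => hA 2 a)
  rcases h0 with h0 | h0 | h0 <;> rcases h1 with h1 | h1 | h1 <;>
    rcases h2 with h2 | h2 | h2 <;>
    simp_all [AGraph.SatIdWith, AGraph.eval, G0, imp3a]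

lemma G0_sat3b : G0.SatImp imp3b := by
  intro h hA hp
  have p1 := hp _ (Set.mem_insert _ _)
  have p2 := hp _ (Set.mem_insert_of_mem _ (Set.mem_insert _ _))
  have p3 := hp _ (Set.mem_insert_of_mem _ (Set.mem_insert_of_mem _ (Set.mem_insert _ _)))
  have p4 := hp _ (Set.mem_insert_of_mem _ (Set.mem_insert_of_mem _
    (Set.mem_insert_of_mem _ (Set.mem_insert _ _))))
  have p5 := hp _ (Set.mem_insert_of_mem _ (Set.mem_insert_of_mem _
    (Set.mem_insert_of_mem _ (Set.mem_insert_of_mem _ (Set.mem_insert _ _)))))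
  have p6 := hp _ (Set.mem_insert_of_mem _ (Set.mem_insert_of_mem _
    (Set.mem_insert_of_mem _ (Set.mem_insert_of_mem _ (Set.mem_insert_of_mem _ rfl)))))
  have h0 := tri (h 0) (fun a => hA 0 a)
  have h1 := tri (h 1) (fun a => hA 1 a)
  have h2 := tri (h 2) (fun a => hA 2 a)
  rcases h0 with h0 | h0 | h0 <;> rcases h1 with h1 | h1 | h1 <;>
    rcases h2 with h2 | h2 | h2 <;>
    simp_all [AGraph.SatIdWith, AGraph.eval, G0, imp3b]

lemma mem_qId {imp : Imp} (h : G0.SatImp imp) : imp ∈ qId {G0} := by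
  intro H hH
  rw [Set.mem_singleton_iff] at hH
  subst hH
  exact h

/-! ### Consequences in a model `G` -/

variable {G : AGraph}

/-- The assignment sending variables 0,1,2 to a,b,c. -/
def asg3 (G : AGraph) (a b c : G.U) : ℕ → Option G.U :=
  fun n => if n = 0 then some a else if n = 1 then some b else if n = 2 then some c else none

lemma asg3_assign {a b c : G.U} (ha : a ∈ G.verts) (hb : b ∈ G.verts) (hc : c ∈ G.verts) :
    G.Assign (asg3 G a b c) := by
  intro n u hu
  unfold asg3 at hu
  split_ifs at hu <;> (cases hu; assumption)

lemma eval_app_vars (h : ℕ → Option G.U) (i j : ℕ) (u v : G.U)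
    (hi : h i = some u) (hj : h j = some v) :
    G.eval h (GTerm.app (GTerm.var i) (GTerm.var j)) =
      if G.Edge u v then some u else none := by
  simp [AGraph.eval, hi, hj]

lemma asg3_0 (a b c : G.U) : asg3 G a b c 0 = some a := rfl
lemma asg3_1 (a b c : G.U) : asg3 G a b c 1 = some b := rfl
lemma asg3_2 (a b c : G.U) : asg3 G a b c 2 = some c := rfl

lemma G_sym (hG : G ∈ ModI (qId {G0})) {a b : G.U} (hab : G.Edge a b) : G.Edge b a := by
  by_contra hn
  have ha := (G.edge_mem a b hab).1
  have hb := (G.edge_mem a b hab).2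
  have hsat := hG impSym (mem_qId G0_satSym) (asg3 G a b b) (asg3_assign ha hb hb)
  have : G.SatIdWith (asg3 G a b b) (.var 0, .inf) := by
    apply hsat
    intro e he
    rcases he with rfl | he
    · show G.eval _ _ = G.eval _ _
      rw [eval_app_vars _ 0 1 a b (asg3_0 a b b) (asg3_1 a b b), if_pos hab]
      rfl
    · rcases he with rfl
      show G.eval _ _ = G.eval _ _
      rw [eval_app_vars _ 1 0 b a (asg3_1 a b b) (asg3_0 a b b), if_neg hn]
      rfl
  exact nomatch (show some a = none from this)

lemma G_nol (hG : G ∈ ModI (qId {G0})) {a b : G.U} (hab : G.Edge a b) (hba : G.Edge b a)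
    (hna : ¬ G.Edge a a) (hnb : ¬ G.Edge b b) : False := by
  have ha := (G.edge_mem a b hab).1
  have hb := (G.edge_mem a b hab).2
  have hsat := hG imp1 (mem_qId G0_sat1) (asg3 G a b b) (asg3_assign ha hb hb)
  have : G.SatIdWith (asg3 G a b b) (.var 0, .inf) := by
    apply hsat
    intro e he
    rcases he with rfl | rfl | rfl | he
    · show G.eval _ _ = G.eval _ _
      rw [eval_app_vars _ 0 1 a b (asg3_0 a b b) (asg3_1 a b b), if_pos hab]; rfl
    · show G.eval _ _ = G.eval _ _
      rw [eval_app_vars _ 1 0 b a (asg3_1 a b b) (asg3_0 a b b), if_pos hba]; rfl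
    · show G.eval _ _ = G.eval _ _
      rw [eval_app_vars _ 0 0 a a (asg3_0 a b b) (asg3_0 a b b), if_neg hna]; rfl
    · rcases he with rfl
      show G.eval _ _ = G.eval _ _
      rw [eval_app_vars _ 1 1 b b (asg3_1 a b b) (asg3_1 a b b), if_neg hnb]; rfl
  exact nomatch (show some a = none from this)

lemma G_3a (hG : G ∈ ModI (qId {G0})) {a b c : G.U}
    (hab : G.Edge a b) (hba : G.Edge b a) (hac : G.Edge a c) (hca : G.Edge c a)
    (hnb : ¬ G.Edge b b) (hnc : ¬ G.Edge c c) : b = c := by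
  have ha := (G.edge_mem a b hab).1
  have hb := (G.edge_mem a b hab).2
  have hc := (G.edge_mem a c hac).2
  have hsat := hG imp3a (mem_qId G0_sat3a) (asg3 G a b c) (asg3_assign ha hb hc)
  have : G.SatIdWith (asg3 G a b c) (.var 1, .var 2) := by
    apply hsat
    intro e he
    rcases he with rfl | rfl | rfl | rfl | rfl | he
    · show G.eval _ _ = G.eval _ _
      rw [eval_app_vars _ 0 1 a b (asg3_0 a b c) (asg3_1 a b c), if_pos hab]; rfl
    · show G.eval _ _ = G.eval _ _
      rw [eval_app_vars _ 1 0 b a (asg3_1 a b c) (asg3_0 a b c), if_pos hba]; rfl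
    · show G.eval _ _ = G.eval _ _
      rw [eval_app_vars _ 0 2 a c (asg3_0 a b c) (asg3_2 a b c), if_pos hac]; rfl
    · show G.eval _ _ = G.eval _ _
      rw [eval_app_vars _ 2 0 c a (asg3_2 a b c) (asg3_0 a b c), if_pos hca]; rfl
    · show G.eval _ _ = G.eval _ _
      rw [eval_app_vars _ 1 1 b b (asg3_1 a b c) (asg3_1 a b c), if_neg hnb]; rfl
    · rcases he with rfl
      show G.eval _ _ = G.eval _ _
      rw [eval_app_vars _ 2 2 c c (asg3_2 a b c) (asg3_2 a b c), if_neg hnc]; rfl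
  exact Option.some.inj this

lemma G_3b (hG : G ∈ ModI (qId {G0})) {a b c : G.U}
    (hab : G.Edge a b) (hba : G.Edge b a) (hac : G.Edge a c) (hca : G.Edge c a)
    (hlb : G.Edge b b) (hlc : G.Edge c c) : b = c := by
  have ha := (G.edge_mem a b hab).1
  have hb := (G.edge_mem a b hab).2
  have hc := (G.edge_mem a c hac).2
  have hsat := hG imp3b (mem_qId G0_sat3b) (asg3 G a b c) (asg3_assign ha hb hc)
  have : G.SatIdWith (asg3 G a b c) (.var 1, .var 2) := by
    apply hsat
    intro e he
    rcases he with rfl | rfl | rfl | rfl | rfl | he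
    · show G.eval _ _ = G.eval _ _
      rw [eval_app_vars _ 0 1 a b (asg3_0 a b c) (asg3_1 a b c), if_pos hab]; rfl
    · show G.eval _ _ = G.eval _ _
      rw [eval_app_vars _ 1 0 b a (asg3_1 a b c) (asg3_0 a b c), if_pos hba]; rfl
    · show G.eval _ _ = G.eval _ _
      rw [eval_app_vars _ 0 2 a c (asg3_0 a b c) (asg3_2 a b c), if_pos hac]; rfl
    · show G.eval _ _ = G.eval _ _
      rw [eval_app_vars _ 2 0 c a (asg3_2 a b c) (asg3_0 a b c), if_pos hca]; rfl
    · show G.eval _ _ = G.eval _ _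
      rw [eval_app_vars _ 1 1 b b (asg3_1 a b c) (asg3_1 a b c), if_pos hlb]; rfl
    · rcases he with rfl
      show G.eval _ _ = G.eval _ _
      rw [eval_app_vars _ 2 2 c c (asg3_2 a b c) (asg3_2 a b c), if_pos hlc]; rfl
  exact Option.some.inj this

end

end S13
namespace S13

noncomputable section

variable {G : AGraph}

lemma reach_subset (a : G.U) (T : Set G.U) (ha : a ∈ T)
    (hcl : ∀ x ∈ T, ∀ y, G.Edge x y → y ∈ T) : G.reachSet a ⊆ T := by
  intro b hb
  induction hb with
  | refl => exact ha
  | tail _ h ih => exact hcl _ ih _ h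

lemma mem_reach_self (a : G.U) : a ∈ G.reachSet a := Relation.ReflTransGen.refl

lemma mem_reach_edge {a b : G.U} (h : G.Edge a b) : b ∈ G.reachSet a :=
  Relation.ReflTransGen.single h

lemma reachSub_verts (a : G.U) : (G.reachSub a).verts = G.verts ∩ G.reachSet a := rfl

lemma reachSub_edge (a : G.U) (x y : G.U) :
    (G.reachSub a).Edge x y ↔ G.Edge x y ∧ x ∈ G.reachSet a ∧ y ∈ G.reachSet a :=
  Iff.rfl

lemma induce_edge (S : Set ℕ) (x y : ℕ) :
    (G0.induce S).Edge x y ↔ G0.Edge x y ∧ x ∈ S ∧ y ∈ S := Iff.rfl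

lemma G0_verts (n : ℕ) : n ∈ G0.verts ↔ n = 0 ∨ n = 1 := Iff.rfl

lemma E01 : G0.Edge (0 : ℕ) (1 : ℕ) := Or.inl ⟨rfl, rfl⟩
lemma E10 : G0.Edge (1 : ℕ) (0 : ℕ) := Or.inr (Or.inl ⟨rfl, rfl⟩)
lemma E11 : G0.Edge (1 : ℕ) (1 : ℕ) := Or.inr (Or.inr ⟨rfl, rfl⟩)
lemma nE00 : ¬ G0.Edge (0 : ℕ) (0 : ℕ) := by
  rintro (⟨-, h⟩ | ⟨h, -⟩ | ⟨h, -⟩) <;> exact Nat.noConfusion h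

/-- The single-vertex case. -/
lemma iso_single {a : G.U} (ha : a ∈ G.verts) (hr : G.reachSet a = {a}) (n : ℕ)
    (hn : n = 0 ∨ n = 1) (hloop : G.Edge a a ↔ G0.Edge n n) :
    IsIsomorphic (G.reachSub a) (G0.induce ({n} : Set ℕ)) := by
  have hv : (G.reachSub a).verts = {a} := by
    rw [reachSub_verts, hr]
    exact Set.inter_eq_self_of_subset_right (by simpa using ha)
  have hv' : (G0.induce ({n} : Set ℕ)).verts = ({n} : Set ℕ) := by
    show G0.verts ∩ ({n} : Set ℕ) = ({n} : Set ℕ)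
    apply Set.inter_eq_self_of_subset_right
    intro k hk
    change k = n at hk
    rw [hk]
    exact hn
  refine ⟨fun _ => n, ?_, ?_⟩
  · rw [hv, hv']
    refine ⟨fun x _ => rfl, fun x hx y hy _ => ?_, fun k hk => ⟨a, rfl, hk.symm⟩⟩
    change x = a at hx; change y = a at hy
    rw [hx, hy]
  · intro x hx y hy
    rw [hv] at hx hy; change x = a at hx; change y = a at hy
    rw [hx, hy, reachSub_edge, induce_edge, hr]
    constructor
    · rintro ⟨h, -, -⟩; exact ⟨hloop.1 h, rfl, rfl⟩
    · rintro ⟨h, -, -⟩; exact ⟨hloop.2 h, rfl, rfl⟩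

/-- The two-vertex case. -/
lemma iso_pair {a b : G.U} (ha : a ∈ G.verts) (hb : b ∈ G.verts) (hne : b ≠ a)
    (hr : G.reachSet a = {a, b}) (n m : ℕ) (hnm : (n = 0 ∧ m = 1) ∨ (n = 1 ∧ m = 0))
    (haa : G.Edge a a ↔ G0.Edge n n) (habe : G.Edge a b ↔ G0.Edge n m)
    (hbae : G.Edge b a ↔ G0.Edge m n) (hbb : G.Edge b b ↔ G0.Edge m m) :
    IsIsomorphic (G.reachSub a) (G0.induce ({0, 1} : Set ℕ)) := by
  have hnm' : n ≠ m := by rcases hnm with ⟨rfl, rfl⟩ | ⟨rfl, rfl⟩ <;> simp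
  have hn01 : n = 0 ∨ n = 1 := by rcases hnm with ⟨rfl, -⟩ | ⟨rfl, -⟩ <;> simp
  have hm01 : m = 0 ∨ m = 1 := by rcases hnm with ⟨-, rfl⟩ | ⟨-, rfl⟩ <;> simp
  have hv : (G.reachSub a).verts = {a, b} := by
    rw [reachSub_verts, hr]
    apply Set.inter_eq_self_of_subset_right
    intro x hx
    rcases hx with hx | hx <;> rw [hx] <;> assumption
  have hv' : (G0.induce ({0, 1} : Set ℕ)).verts = ({0, 1} : Set ℕ) := by
    show G0.verts ∩ ({0, 1} : Set ℕ) = ({0, 1} : Set ℕ)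
    apply Set.inter_eq_self_of_subset_right
    intro k hk
    change @Eq ℕ k 0 ∨ @Eq ℕ k 1
    exact hk
  set f : G.U → ℕ := fun u => if u = a then n else m with hf
  have hfa : f a = n := if_pos rfl
  have hfb : f b = m := if_neg hne
  refine ⟨f, ?_, ?_⟩
  · rw [hv, hv']
    refine ⟨?_, ?_, ?_⟩
    · intro x hx
      rcases hx with hx | hx <;> rw [hx]
      · rw [hfa]; exact hn01
      · rw [hfb]; exact hm01
    · intro x hx y hy hxy
      change x = a ∨ x = b at hx; change y = a ∨ y = b at hy
      rcases hx with hx | hx <;> rcases hy with hy | hy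
      · rw [hx, hy]
      · rw [hx, hy, hfa, hfb] at hxy; exact absurd hxy hnm'
      · rw [hx, hy, hfb, hfa] at hxy; exact absurd hxy (Ne.symm hnm')
      · rw [hx, hy]
    · intro k hk
      change @Eq ℕ k 0 ∨ @Eq ℕ k 1 at hk
      rcases hnm with ⟨hn, hm⟩ | ⟨hn, hm⟩ <;> rcases hk with hk | hk
      · exact ⟨a, Or.inl rfl, by rw [hfa, hn, hk]⟩
      · exact ⟨b, Or.inr rfl, by rw [hfb, hm, hk]⟩
      · exact ⟨b, Or.inr rfl, by rw [hfb, hm, hk]⟩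
      · exact ⟨a, Or.inl rfl, by rw [hfa, hn, hk]⟩
  · intro x hx y hy
    rw [hv] at hx hy
    have hmem : ∀ u : G.U, u ∈ ({a, b} : Set G.U) → u ∈ G.reachSet a := by
      rw [hr]; exact fun u hu => hu
    have hS : ∀ k : ℕ, (k = n ∨ k = m) → k ∈ ({0, 1} : Set ℕ) := by
      rintro k (rfl | rfl)
      · exact hn01
      · exact hm01
    rcases hx with hx | hx <;> rcases hy with hy | hy <;> rw [hx, hy] <;>
      rw [reachSub_edge, induce_edge]
    · rw [hfa]
      constructor
      · rintro ⟨h, -, -⟩; exact ⟨haa.1 h, hS n (Or.inl rfl), hS n (Or.inl rfl)⟩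
      · rintro ⟨h, -, -⟩; exact ⟨haa.2 h, hmem _ (Or.inl rfl), hmem _ (Or.inl rfl)⟩
    · rw [hfa, hfb]
      constructor
      · rintro ⟨h, -, -⟩; exact ⟨habe.1 h, hS n (Or.inl rfl), hS m (Or.inr rfl)⟩
      · rintro ⟨h, -, -⟩; exact ⟨habe.2 h, hmem _ (Or.inl rfl), hmem _ (Or.inr rfl)⟩
    · rw [hfa, hfb]
      constructor
      · rintro ⟨h, -, -⟩; exact ⟨hbae.1 h, hS m (Or.inr rfl), hS n (Or.inl rfl)⟩
      · rintro ⟨h, -, -⟩; exact ⟨hbae.2 h, hmem _ (Or.inr rfl), hmem _ (Or.inl rfl)⟩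
    · rw [hfb]
      constructor
      · rintro ⟨h, -, -⟩; exact ⟨hbb.1 h, hS m (Or.inr rfl), hS m (Or.inr rfl)⟩
      · rintro ⟨h, -, -⟩; exact ⟨hbb.2 h, hmem _ (Or.inr rfl), hmem _ (Or.inr rfl)⟩

lemma forward_comp (hG : G ∈ ModI (qId {G0})) {a : G.U} (ha : a ∈ G.verts) :
    ∃ S : Set ℕ, IsIsomorphic (G.reachSub a) (G0.induce S) := by
  by_cases hL : G.Edge a a
  · by_cases hN : ∃ b, G.Edge a b ∧ b ≠ a
    · -- case D : loop at a, loopless neighbour b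
      obtain ⟨b, hab, hne⟩ := hN
      have hba := G_sym hG hab
      have hnb : ¬ G.Edge b b := fun hbb => hne (G_3b hG hab hba hL hL hbb hL)
      have hr : G.reachSet a = {a, b} := by
        apply Set.Subset.antisymm
        · apply reach_subset
          · exact Or.inl rfl
          · intro x hx y hxy
            rcases hx with hx | hx <;> rw [hx] at hxy
            · by_cases hy : G.Edge y y
              · exact Or.inl (G_3b hG hxy (G_sym hG hxy) hL hL hy hL)
              · exact Or.inr (G_3a hG hxy (G_sym hG hxy) hab hba hy hnb)
            · by_cases hy : G.Edge y y
              · exact Or.inl (G_3b hG hxy (G_sym hG hxy) hba hab hy hL)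
              · exact absurd (G_nol hG hxy (G_sym hG hxy) hnb hy) not_false
        · intro x hx
          rcases hx with hx | hx <;> rw [hx]
          · exact mem_reach_self a
          · exact mem_reach_edge hab
      exact ⟨({0, 1} : Set ℕ), iso_pair ha (G.edge_mem a b hab).2 hne hr 1 0
        (Or.inr ⟨rfl, rfl⟩) (iff_of_true hL E11) (iff_of_true hab E10)
        (iff_of_true hba E01) (iff_of_false hnb nE00)⟩
    · -- case C : loop at a, no other neighbour
      push_neg at hN
      have hr : G.reachSet a = {a} := by
        apply Set.Subset.antisymm
        · apply reach_subset
          · rfl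
          · intro x hx y hxy
            rw [Set.mem_singleton_iff] at hx
            rw [hx] at hxy
            exact hN y hxy
        · intro x hx
          rw [Set.mem_singleton_iff] at hx
          rw [hx]
          exact mem_reach_self a
      exact ⟨({1} : Set ℕ), iso_single ha hr 1 (Or.inr rfl) (iff_of_true hL E11)⟩
  · by_cases hN : ∃ b, G.Edge a b
    · -- case B : no loop at a, neighbour b
      obtain ⟨b, hab⟩ := hN
      have hba := G_sym hG hab
      have hne : b ≠ a := fun h => hL (h ▸ hab)
      have hlb : G.Edge b b := by
        by_contra hbb
        exact G_nol hG hab hba hL hbb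
      have hr : G.reachSet a = {a, b} := by
        apply Set.Subset.antisymm
        · apply reach_subset
          · exact Or.inl rfl
          · intro x hx y hxy
            rcases hx with hx | hx <;> rw [hx] at hxy
            · by_cases hy : G.Edge y y
              · exact Or.inr (G_3b hG hxy (G_sym hG hxy) hab hba hy hlb)
              · exact absurd (G_nol hG hxy (G_sym hG hxy) hL hy) not_false
            · by_cases hy : G.Edge y y
              · exact Or.inr (G_3b hG hxy (G_sym hG hxy) hlb hlb hy hlb)
              · exact Or.inl (G_3a hG hxy (G_sym hG hxy) hba hab hy hL)
        · intro x hx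
          rcases hx with hx | hx <;> rw [hx]
          · exact mem_reach_self a
          · exact mem_reach_edge hab
      exact ⟨({0, 1} : Set ℕ), iso_pair ha (G.edge_mem a b hab).2 hne hr 0 1
        (Or.inl ⟨rfl, rfl⟩) (iff_of_false hL nE00) (iff_of_true hab E01)
        (iff_of_true hba E10) (iff_of_true hlb E11)⟩
    · -- case A : isolated loopless vertex
      push_neg at hN
      have hr : G.reachSet a = {a} := by
        apply Set.Subset.antisymm
        · apply reach_subset
          · rfl
          · intro x hx y hxy
            rw [Set.mem_singleton_iff] at hx
            rw [hx] at hxy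
            exact absurd hxy (hN y)
        · intro x hx
          rw [Set.mem_singleton_iff] at hx
          rw [hx]
          exact mem_reach_self a
      exact ⟨({0} : Set ℕ), iso_single ha hr 0 (Or.inl rfl) (iff_of_false hL nE00)⟩

end

end S13
namespace S13

noncomputable section

variable {G : AGraph}

/-- The multiplication on `V(G) ∪ {∞}` (with `none` as `∞`). -/
def Omul (H : AGraph) : Option H.U → Option H.U → Option H.U
  | some a, some b => if H.Edge a b then some a else none
  | _, _ => none

lemma eval_app' (H : AGraph) (h : ℕ → Option H.U) (t1 t2 : GTerm ℕ) :
    H.eval h (t1.app t2) = Omul H (H.eval h t1) (H.eval h t2) := by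
  rw [AGraph.eval]
  rcases H.eval h t1 with - | x <;> rcases H.eval h t2 with - | y <;> rfl

lemma Omul_none_left (H : AGraph) (o : Option H.U) : Omul H none o = none := by
  rcases o with - | u <;> rfl

lemma Omul_none_right (H : AGraph) (o : Option H.U) : Omul H o none = none := by
  rcases o with - | u <;> rfl

lemma Omul_some (H : AGraph) (u v : H.U) :
    Omul H (some u) (some v) = if H.Edge u v then some u else none := rfl

/-- The component projection of `A(G)` onto `A(G0)` determined by `f` and the
component `R`. -/
def Fm (G : AGraph) (f : G.U → ℕ) (R : Set G.U) : Option G.U → Option ℕ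
  | none => none
  | some x => if x ∈ R then some (f x) else none

lemma Fm_none (f : G.U → ℕ) (R : Set G.U) : Fm G f R none = none := rfl

lemma Fm_mem (f : G.U → ℕ) (R : Set G.U) {x : G.U} (hx : x ∈ R) :
    Fm G f R (some x) = some (f x) := if_pos hx

lemma Fm_not_mem (f : G.U → ℕ) (R : Set G.U) {x : G.U} (hx : x ∉ R) :
    Fm G f R (some x) = none := if_neg hx

/-- Values of evaluations are vertices. -/
lemma eval_mem (h : ℕ → Option G.U) (hA : G.Assign h) (t : GTerm ℕ) :
    ∀ u, G.eval h t = some u → u ∈ G.verts := by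
  induction t with
  | var x => exact fun u hu => hA x u hu
  | inf => intro u hu; exact nomatch hu
  | app t1 t2 ih1 ih2 =>
    intro u hu
    rw [eval_app' G h t1 t2] at hu
    rcases h1 : G.eval h t1 with - | x
    · rw [h1, Omul_none_left] at hu; exact nomatch hu
    · rcases h2 : G.eval h t2 with - | y
      · rw [h1, h2, Omul_none_right] at hu; exact nomatch hu
      · rw [h1, h2, Omul_some] at hu
        by_cases hxy : G.Edge x y
        · rw [if_pos hxy] at hu
          cases hu
          exact ih1 _ h1
        · rw [if_neg hxy] at hu
          exact nomatch hu

/-- The projection is multiplicative. -/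
lemma Fm_mul (f : G.U → ℕ) (R : Set G.U)
    (hedge : ∀ x ∈ R, ∀ y ∈ R, (G.Edge x y ↔ G0.Edge (f x) (f y)))
    (hclose : ∀ x ∈ R, ∀ y, G.Edge x y → y ∈ R) (o1 o2 : Option G.U) :
    Fm G f R (Omul G o1 o2) = Omul G0 (Fm G f R o1) (Fm G f R o2) := by
  rcases o1 with - | x
  · erw [Omul_none_left, Fm_none, Omul_none_left]; rfl
  · rcases o2 with - | y
    · erw [Omul_none_right, Fm_none, Omul_none_right]; rfl
    · by_cases hx : x ∈ R
      · by_cases hy : y ∈ R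
        · erw [Fm_mem f R hx, Fm_mem f R hy, Omul_some, Omul_some]
          by_cases hxy : G.Edge x y
          · rw [if_pos hxy, if_pos ((hedge x hx y hy).1 hxy), Fm_mem f R hx]; rfl
          · rw [if_neg hxy, if_neg (fun hc => hxy ((hedge x hx y hy).2 hc)), Fm_none]; rfl
        · have hxy : ¬ G.Edge x y := fun hc => hy (hclose x hx y hc)
          erw [Omul_some, if_neg hxy, Fm_none, Fm_not_mem f R hy, Omul_none_right]; rfl
      · erw [Fm_not_mem f R hx, Omul_none_left, Omul_some]
        by_cases hxy : G.Edge x y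
        · rw [if_pos hxy, Fm_not_mem f R hx]; rfl
        · rw [if_neg hxy, Fm_none]; rfl

/-- The projection commutes with evaluation. -/
lemma Fm_eval (f : G.U → ℕ) (R : Set G.U)
    (hedge : ∀ x ∈ R, ∀ y ∈ R, (G.Edge x y ↔ G0.Edge (f x) (f y)))
    (hclose : ∀ x ∈ R, ∀ y, G.Edge x y → y ∈ R)
    (h : ℕ → Option G.U) (t : GTerm ℕ) :
    G0.eval (fun n => Fm G f R (h n)) t = Fm G f R (G.eval h t) := by
  induction t with
  | var x => rfl
  | inf => rfl
  | app t1 t2 ih1 ih2 =>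
    erw [eval_app' G h t1 t2, eval_app' G0 _ t1 t2, ih1, ih2,
      Fm_mul f R hedge hclose]

/-- Backward direction of statement 13. -/
lemma backward (hund : G.Undirected)
    (hcomp : ∀ a ∈ G.verts, ∃ S : Set ℕ, IsIsomorphic (G.reachSub a) (G0.induce S)) :
    G ∈ ModI (qId {G0}) := by
  intro imp himp h hA hprem
  have hG0 : G0.SatImp imp := himp G0 rfl
  -- the key pointwise separation property
  have key : ∀ a ∈ G.verts, ∃ (f : G.U → ℕ) (R : Set G.U),
      a ∈ R ∧ Set.InjOn f R ∧
      Fm G f R (G.eval h imp.concl.1) = Fm G f R (G.eval h imp.concl.2) := by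
    intro a ha
    obtain ⟨fS0, hbij, hiff⟩ := (hcomp a ha).choose_spec
    have fSdef : ∃ fS : G.U → ℕ, fS = fS0 := ⟨fS0, rfl⟩
    obtain ⟨fS, hfS⟩ := fSdef
    set R : Set G.U := G.verts ∩ G.reachSet a with hR
    have haR : a ∈ R := ⟨ha, mem_reach_self a⟩
    have hclose : ∀ x ∈ R, ∀ y, G.Edge x y → y ∈ R := by
      intro x hx y hxy
      exact ⟨(G.edge_mem x y hxy).2, Relation.ReflTransGen.tail hx.2 hxy⟩
    have hRsub : R = (G.reachSub a).verts := rfl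
    have hSmem : ∀ x ∈ R, fS x ∈ (hcomp a ha).choose := by
      intro x hx
      have := hbij.mapsTo (hRsub ▸ hx)
      rw [hfS]
      exact this.2
    have hedge : ∀ x ∈ R, ∀ y ∈ R, (G.Edge x y ↔ G0.Edge (fS x) (fS y)) := by
      intro x hx y hy
      have h1 := hiff x (hRsub ▸ hx) y (hRsub ▸ hy)
      erw [reachSub_edge, induce_edge] at h1
      rw [hfS]
      constructor
      · intro hxy
        exact (h1.1 ⟨hxy, hx.2, hy.2⟩).1
      · intro hxy
        exact (h1.2 ⟨hxy, hfS ▸ hSmem x hx, hfS ▸ hSmem y hy⟩).1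
    refine ⟨fS, R, haR, ?_, ?_⟩
    · intro x hx y hy hxy
      rw [hfS] at hxy
      exact hbij.injOn (hRsub ▸ hx) (hRsub ▸ hy) hxy
    · -- transfer the implication through the projection
      have hA' : G0.Assign (fun n => Fm G fS R (h n)) := by
        intro n u hu
        have hu' : Fm G fS R (h n) = some u := hu
        rcases hn : h n with - | x
        · rw [hn, Fm_none] at hu'; exact nomatch hu'
        · rw [hn] at hu'
          by_cases hx : x ∈ R
          · rw [Fm_mem fS R hx] at hu'
            cases hu'
            rw [hfS]
            exact (hbij.mapsTo (hRsub ▸ hx)).1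
          · rw [Fm_not_mem fS R hx] at hu'
            exact nomatch hu'
      have hprem' : ∀ e ∈ imp.prem, G0.SatIdWith (fun n => Fm G fS R (h n)) e := by
        intro e he
        show G0.eval _ e.1 = G0.eval _ e.2
        rw [Fm_eval fS R hedge hclose h e.1, Fm_eval fS R hedge hclose h e.2,
          hprem e he]
      have hcon := hG0 (fun n => Fm G fS R (h n)) hA' hprem'
      change G0.eval _ imp.concl.1 = G0.eval _ imp.concl.2 at hcon
      erw [Fm_eval fS R hedge hclose h imp.concl.1,
        Fm_eval fS R hedge hclose h imp.concl.2] at hcon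
      exact hcon
  -- conclude
  show G.eval h imp.concl.1 = G.eval h imp.concl.2
  rcases hc1 : G.eval h imp.concl.1 with - | u <;>
    rcases hc2 : G.eval h imp.concl.2 with - | v
  · rfl
  · exfalso
    have hv := eval_mem h hA _ _ hc2
    obtain ⟨f, R, hmem, hinj, hFm⟩ := key v hv
    rw [hc1, hc2, Fm_none, Fm_mem f R hmem] at hFm
    exact nomatch hFm
  · exfalso
    have hu := eval_mem h hA _ _ hc1
    obtain ⟨f, R, hmem, hinj, hFm⟩ := key u hu
    rw [hc1, hc2, Fm_none, Fm_mem f R hmem] at hFm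
    exact nomatch hFm
  · have hu := eval_mem h hA _ _ hc1
    obtain ⟨f, R, hmem, hinj, hFm⟩ := key u hu
    rw [hc1, hc2, Fm_mem f R hmem] at hFm
    by_cases hvR : v ∈ R
    · rw [Fm_mem f R hvR] at hFm
      rw [hinj hmem hvR (Option.some.inj hFm)]
    · rw [Fm_not_mem f R hvR] at hFm
      exact nomatch hFm

end

end S13
/-- `G ∈ Mod qId G₀` iff `G` is undirected and each connected
component of `G` is isomorphic to an induced subgraph of `G₀`. -/
theorem statement_13 (G : AGraph) :
    G ∈ ModI (qId {G0}) ↔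
      (G.Undirected ∧
        ∀ a ∈ G.verts, ∃ S : Set ℕ, IsIsomorphic (G.reachSub a) (G0.induce S)) := by
  constructor
  · intro hG
    exact ⟨fun a b hab => S13.G_sym hG hab, fun a ha => S13.forward_comp hG ha⟩
  · intro ⟨h1, h2⟩
    exact S13.backward h1 h2
end
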